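/- Let (R,m,k) be a commutative Noetherian local ring and let M be a nonzero finitely generated R-module. Then k is a direct summand of M if and only if soc(M) is not contained in m·M. In particular, k is a direct summand of m if and only if soc(R) is not contained in m². -/

import Mathlib

open IsLocalRing

universe u

/-- `k = R/m` is a direct summand of the `R`-module `M`, i.e. `M ≅ k ⊕ N` for some `N`. -/
def ResidueFieldIsSummand (R : Type u) [CommRing R] [IsLocalRing R]
    (M : Type u) [AddCommGroup M] [Module R M] : Prop :=
  ∃ p q : Submodule R M, IsCompl p q ∧ Nonempty (p ≃ₗ[R] ResidueField R)

section Aux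

variable (R : Type u) [CommRing R] [IsLocalRing R]
  (M : Type u) [AddCommGroup M] [Module R M]

/-- Backward direction: a socle element not in `mM` generates a copy of `k` that splits off. -/
lemma summand_of_socle_not_le [IsNoetherianRing R] [Module.Finite R M]
    (x : M) (hx0 : x ≠ 0) (hxt : ∀ a ∈ maximalIdeal R, a • x = 0)
    (hxm : x ∉ (maximalIdeal R) • (⊤ : Submodule R M)) :
    ResidueFieldIsSummand R M := by
  have : IsNoetherian R M := inferInstance
  -- choose q maximal among submodules containing mM and not containing x
  obtain ⟨q, ⟨hq1, hq2⟩, hqmax⟩ :=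
    (set_has_maximal_iff_noetherian.mpr this)
      {N : Submodule R M | (maximalIdeal R) • (⊤ : Submodule R M) ≤ N ∧ x ∉ N}
      ⟨(maximalIdeal R) • (⊤ : Submodule R M), le_rfl, hxm⟩
  refine ⟨Submodule.span R {x}, q, ⟨?_, ?_⟩, ?_⟩
  · -- disjoint
    rw [disjoint_iff]
    ext y
    simp only [Submodule.mem_inf, Submodule.mem_bot]
    constructor
    · rintro ⟨hy1, hy2⟩
      obtain ⟨r, rfl⟩ := Submodule.mem_span_singleton.mp hy1
      by_cases hr : r ∈ maximalIdeal R
      · exact hxt r hr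
      · exfalso
        have hru : IsUnit r := by
          by_contra h
          exact hr ((IsLocalRing.mem_maximalIdeal r).mpr h)
        obtain ⟨u, rfl⟩ := hru
        exact hq2 (by
          have := q.smul_mem (↑u⁻¹ : R) hy2
          rwa [smul_smul, Units.inv_mul, one_smul] at this)
    · rintro rfl; simp
  · -- codisjoint
    rw [codisjoint_iff, eq_top_iff]
    intro y _
    by_cases hy : y ∈ q
    · exact Submodule.mem_sup_right hy
    · -- by maximality, x ∈ q ⊔ span {y}
      have hxq : x ∈ q ⊔ Submodule.span R {y} := by
        by_contra hxn
        exact hy (by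
          have := hqmax (q ⊔ Submodule.span R {y}) ⟨le_trans hq1 le_sup_left, hxn⟩
          have hle : q ⊔ Submodule.span R {y} ≤ q := by
            by_contra hnle
            exact this (lt_of_le_of_ne le_sup_left (fun h => hnle (le_of_eq h.symm)))
          exact hle (Submodule.mem_sup_right (Submodule.mem_span_singleton_self y)))
      obtain ⟨a, ha, b, hb, hab⟩ := Submodule.mem_sup.mp hxq
      obtain ⟨r, rfl⟩ := Submodule.mem_span_singleton.mp hb
      have hru : IsUnit r := by
        by_contra h
        have hr : r ∈ maximalIdeal R := (IsLocalRing.mem_maximalIdeal r).mpr h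
        have : r • y ∈ q := hq1 (Submodule.smul_mem_smul hr Submodule.mem_top)
        exact hq2 (hab ▸ q.add_mem ha this)
      obtain ⟨u, rfl⟩ := hru
      have : y = (↑u⁻¹ : R) • ((u : R) • y) := by
        rw [smul_smul, Units.inv_mul, one_smul]
      rw [this]
      have hxy : (u : R) • y = x - a := by rw [← hab]; abel
      rw [hxy, smul_sub]
      exact Submodule.sub_mem _
        (Submodule.mem_sup_left (Submodule.smul_mem _ _ (Submodule.mem_span_singleton_self x)))
        (Submodule.mem_sup_right (q.smul_mem _ ha))
  · -- span {x} ≃ k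
    have hker : LinearMap.ker (LinearMap.toSpanSingleton R M x)
        = (maximalIdeal R : Submodule R R) := by
      ext r
      simp only [LinearMap.mem_ker, LinearMap.toSpanSingleton_apply]
      constructor
      · intro h
        by_contra hr
        have hru : IsUnit r := by
          by_contra h'
          exact hr ((IsLocalRing.mem_maximalIdeal r).mpr h')
        obtain ⟨u, rfl⟩ := hru
        exact hx0 (by simpa using congrArg (fun z => (↑u⁻¹ : R) • z) h)
      · exact fun h => hxt r h
    have hrange : LinearMap.range (LinearMap.toSpanSingleton R M x) = Submodule.span R {x} :=
      (LinearMap.span_singleton_eq_range R M x).symm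
    exact ⟨(LinearEquiv.ofEq _ _ hrange.symm).trans
      ((LinearMap.toSpanSingleton R M x).quotKerEquivRange.symm.trans
        (hker ▸ LinearEquiv.refl R _ :
          (R ⧸ LinearMap.ker (LinearMap.toSpanSingleton R M x)) ≃ₗ[R] ResidueField R))⟩

end Aux

section Aux2
variable (R : Type u) [CommRing R] [IsLocalRing R]
  (M : Type u) [AddCommGroup M] [Module R M]

lemma exists_socle_of_summand (h : ResidueFieldIsSummand R M) :
    ∃ x : M, x ≠ 0 ∧ (∀ a ∈ maximalIdeal R, a • x = 0) ∧
      x ∉ (maximalIdeal R) • (⊤ : Submodule R M) := by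
  obtain ⟨p, q, hc, ⟨e⟩⟩ := h
  -- scalars in m act as zero on p
  have hsmul : ∀ a ∈ maximalIdeal R, ∀ z : p, a • z = 0 := by
    intro a ha z
    have h1 : a • e z = 0 := by
      rw [Algebra.smul_def, IsLocalRing.ResidueField.algebraMap_eq, show IsLocalRing.residue R a = 0 from Ideal.Quotient.eq_zero_iff_mem.mpr ha, zero_mul]
    have := congrArg e.symm h1
    simpa using this
  refine ⟨↑(e.symm 1), ?_, ?_, ?_⟩
  · intro h0
    have : e.symm 1 = 0 := Subtype.ext (by simpa using h0)
    have := congrArg e this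
    simp only [LinearEquiv.apply_symm_apply, map_zero] at this
    exact one_ne_zero this
  · intro a ha
    have := hsmul a ha (e.symm 1)
    calc a • (↑(e.symm 1) : M) = ↑(a • e.symm 1) := rfl
      _ = 0 := by rw [this]; rfl
  · intro hmem
    have hq : (maximalIdeal R) • (⊤ : Submodule R M) ≤ q := by
      refine Submodule.smul_le.mpr ?_
      intro a ha y _
      obtain ⟨yp, yq, hyp, hyq, rfl⟩ := Submodule.codisjoint_iff_exists_add_eq.mp hc.codisjoint y
      rw [smul_add]
      have h0 : a • yp = 0 := by
        have := hsmul a ha ⟨yp, hyp⟩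
        calc a • yp = ↑(a • (⟨yp, hyp⟩ : p)) := rfl
          _ = 0 := by rw [this]; rfl
      rw [h0, zero_add]
      exact q.smul_mem a hyq
    have hx : (↑(e.symm 1) : M) ∈ p ⊓ q := ⟨(e.symm 1).2, hq hmem⟩
    rw [hc.inf_eq_bot] at hx
    have : e.symm 1 = 0 := Subtype.ext (by simpa using hx)
    have := congrArg e this
    simp only [LinearEquiv.apply_symm_apply, map_zero] at this
    exact one_ne_zero this

end Aux2

theorem stmt0 (R : Type u) [CommRing R] [IsNoetherianRing R] [IsLocalRing R]
    (hR : ¬ IsField R)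
    (M : Type u) [AddCommGroup M] [Module R M] [Module.Finite R M] [Nontrivial M] :
    (ResidueFieldIsSummand R M ↔
      ¬ Submodule.torsionBySet R M (maximalIdeal R : Set R) ≤
          (maximalIdeal R) • (⊤ : Submodule R M)) ∧
    (ResidueFieldIsSummand R (maximalIdeal R) ↔
      ¬ Submodule.torsionBySet R R (maximalIdeal R : Set R) ≤ (maximalIdeal R) ^ 2) := by
  -- general statement, for any f.g. module N
  have main : ∀ (N : Type u) [AddCommGroup N] [Module R N] [Module.Finite R N],
      ResidueFieldIsSummand R N ↔
      ¬ Submodule.torsionBySet R N (maximalIdeal R : Set R) ≤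
          (maximalIdeal R) • (⊤ : Submodule R N) := by
    intro N _ _ _
    constructor
    · intro h hle
      obtain ⟨x, hx0, hxt, hxm⟩ := exists_socle_of_summand R N h
      exact hxm (hle ((Submodule.mem_torsionBySet_iff _ _).mpr fun a => hxt a a.2))
    · intro h
      obtain ⟨x, hxs, hxm⟩ := SetLike.not_le_iff_exists.mp h
      have hxt : ∀ a ∈ maximalIdeal R, a • x = 0 := fun a ha =>
        (Submodule.mem_torsionBySet_iff _ _).mp hxs ⟨a, ha⟩
      have hx0 : x ≠ 0 := fun h0 => hxm (h0 ▸ Submodule.zero_mem _)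
      exact summand_of_socle_not_le R N x hx0 hxt hxm
  -- socle of R is contained in m
  have socR_le : Submodule.torsionBySet R R (maximalIdeal R : Set R) ≤
      (maximalIdeal R : Submodule R R) := by
    intro x hx
    by_contra hxm
    have hxu : IsUnit x := by
      by_contra h'
      exact hxm ((IsLocalRing.mem_maximalIdeal x).mpr h')
    have hm : maximalIdeal R = ⊥ := by
      ext a
      simp only [Submodule.mem_bot]
      constructor
      · intro ha
        have := (Submodule.mem_torsionBySet_iff _ _).mp hx ⟨a, ha⟩
        simp only [smul_eq_mul] at this
        obtain ⟨u, rfl⟩ := hxu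
        have := congrArg (fun z => z * (↑u⁻¹ : R)) this
        simpa [mul_assoc] using this
      · rintro rfl; exact Submodule.zero_mem _
    exact hR (IsLocalRing.isField_iff_maximalIdeal_eq.mpr hm)
  -- instances for the maximal ideal as a module
  haveI : Module.Finite R ↥(maximalIdeal R) :=
    Module.Finite.iff_fg.mpr (IsNoetherian.noetherian _)
  -- translation between the two torsion conditions
  have trans : (Submodule.torsionBySet R ↥(maximalIdeal R) (maximalIdeal R : Set R) ≤
        (maximalIdeal R) • (⊤ : Submodule R ↥(maximalIdeal R))) ↔
      (Submodule.torsionBySet R R (maximalIdeal R : Set R) ≤ (maximalIdeal R) ^ 2) := by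
    have hmap : Submodule.map (maximalIdeal R).subtype
        ((maximalIdeal R) • (⊤ : Submodule R ↥(maximalIdeal R))) = (maximalIdeal R) ^ 2 := by
      rw [Submodule.map_smul'', Submodule.map_top, Submodule.range_subtype, pow_two, smul_eq_mul]
    constructor
    · intro hle x hx
      have hxm : x ∈ maximalIdeal R := socR_le hx
      have hxt : (⟨x, hxm⟩ : ↥(maximalIdeal R)) ∈
          Submodule.torsionBySet R ↥(maximalIdeal R) (maximalIdeal R : Set R) := by
        rw [Submodule.mem_torsionBySet_iff]
        intro a
        apply Subtype.ext
        have := (Submodule.mem_torsionBySet_iff _ _).mp hx a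
        simpa using this
      have := hle hxt
      have hmem : x ∈ Submodule.map (maximalIdeal R).subtype
          ((maximalIdeal R) • (⊤ : Submodule R ↥(maximalIdeal R))) :=
        ⟨⟨x, hxm⟩, this, rfl⟩
      rwa [hmap] at hmem
    · intro hle y hy
      have hyt : (↑y : R) ∈ Submodule.torsionBySet R R (maximalIdeal R : Set R) := by
        rw [Submodule.mem_torsionBySet_iff]
        intro a
        have := (Submodule.mem_torsionBySet_iff _ _).mp hy a
        have h2 := congrArg ((maximalIdeal R).subtype) this
        simpa using h2
      have := hle hyt
      rw [← hmap] at this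
      obtain ⟨z, hz, hzy⟩ := this
      rwa [show z = y from Subtype.ext hzy] at hz
  refine ⟨main M, (main ↥(maximalIdeal R)).trans ?_⟩
  exact not_congr trans
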